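/- Let f be a probability density function with support S on a standard discrete poset (S, ⪯) having constant rate α. Then for every n ∈ ℕ, ∑_{x∈S} λ_n(x) f(x) = α^{-n}, where λ_n is the cumulative function of order n. In particular, ∑_{x∈S} #(D[x]) f(x) = 1/α. -/

import Mathlib

open scoped ENNReal NNReal

/-- The upper probability function (UPF) of a density `f` on a discrete poset:
`F x = ∑_{t ⪰ x} f t`, computed in `[0,∞]`. -/
noncomputable def upf {S : Type*} [PartialOrder S] (f : S → ℝ≥0) (x : S) : ℝ≥0∞ :=
  ∑' t : {t : S // x ≤ t}, (f t : ℝ≥0∞)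

/-- The cumulative functions `λ_n` on a discrete poset: `λ_0 = 1` and
`λ_{n+1}(x) = ∑_{t ⪯ x} λ_n(t)`. -/
noncomputable def cumul {S : Type*} [PartialOrder S] : ℕ → S → ℝ≥0∞
  | 0 => fun _ => 1
  | (n + 1) => fun x => ∑' t : {t : S // t ≤ x}, cumul n t

lemma tsum_subtype_eq_tsum_ite {S : Type*} (P : S → Prop) [DecidablePred P] (g : S → ℝ≥0∞) :
    ∑' t : {t : S // P t}, g t = ∑' t : S, if P t then g t else 0 := by
  have h := tsum_subtype {t : S | P t} g
  simp [Set.indicator_apply] at h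
  exact h

lemma cumul_coe : ∀ (n : ℕ) {S : Type*} [PartialOrder S] (x : S) (t : {t : S // t ≤ x}),
    cumul n t = cumul n (t : S)
  | 0, S, _, x, t => rfl
  | (n+1), S, _, x, t => by
    show (∑' s : {s : {u : S // u ≤ x} // s ≤ t}, cumul n s)
        = ∑' s : {s : S // s ≤ (t : S)}, cumul n s
    let e : {s : {u : S // u ≤ x} // s ≤ t} ≃ {s : S // s ≤ (t : S)} :=
      { toFun := fun s => ⟨s.1.1, s.2⟩
        invFun := fun s => ⟨⟨s.1, le_trans s.2 t.2⟩, s.2⟩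
        left_inv := fun s => rfl
        right_inv := fun s => rfl }
    rw [← Equiv.tsum_eq e (fun s : {s : S // s ≤ (t : S)} => cumul n s)]
    refine tsum_congr fun s => ?_
    rw [cumul_coe n t s, cumul_coe n x s.1, cumul_coe n (t : S) (e s)]
    rfl


/-- If a PDF `f` with support `S` on a standard discrete poset has
constant rate `α`, then `∑_x λ_n(x) f(x) = α⁻ⁿ` for every `n`; in particular
`∑_x #(D[x]) f(x) = 1/α`. -/
theorem tsum_cumul_mul_eq_inv_pow_of_constantRate
    {S : Type*} [Countable S] [PartialOrder S]
    (hfin : ∀ x : S, {t : S | t ≤ x}.Finite)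
    (f : S → ℝ≥0)
    (hsupp : ∀ x : S, 0 < f x)
    (hpdf : ∑' x : S, (f x : ℝ≥0∞) = 1)
    (α : ℝ) (hα : 0 < α)
    (hrate : ∀ x : S, (f x : ℝ≥0∞) = ENNReal.ofReal α * upf f x) :
    (∀ n : ℕ, ∑' x : S, cumul n x * (f x : ℝ≥0∞) = (ENNReal.ofReal α)⁻¹ ^ n) ∧
    (∑' x : S, (Nat.card {t : S // t ≤ x} : ℝ≥0∞) * (f x : ℝ≥0∞)
      = (ENNReal.ofReal α)⁻¹) := by
  classical
  set a := ENNReal.ofReal α with ha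
  have ha0 : a ≠ 0 := (ENNReal.ofReal_pos.mpr hα).ne'
  have haT : a ≠ ⊤ := ENNReal.ofReal_ne_top
  have hupf : ∀ x, upf f x = a⁻¹ * (f x : ℝ≥0∞) := by
    intro x
    rw [hrate x, ← mul_assoc, ENNReal.inv_mul_cancel ha0 haT, one_mul]
  have key : ∀ n, ∑' x : S, cumul n x * (f x : ℝ≥0∞) = a⁻¹ ^ n := by
    intro n
    induction n with
    | zero => simpa [cumul] using hpdf
    | succ n ih =>
      calc ∑' x : S, cumul (n+1) x * (f x : ℝ≥0∞)
          = ∑' x : S, ∑' t : {t : S // t ≤ x}, cumul n (t : S) * (f x : ℝ≥0∞) := by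
            refine tsum_congr fun x => ?_
            have h1 : cumul (n+1) x = ∑' t : {t : S // t ≤ x}, cumul n (t : S) :=
              tsum_congr fun t => cumul_coe n x t
            rw [h1]
            exact ENNReal.tsum_mul_right.symm
        _ = ∑' x : S, ∑' t : S, (if t ≤ x then cumul n t * (f x : ℝ≥0∞) else 0) := by
            refine tsum_congr fun x => ?_
            rw [tsum_subtype_eq_tsum_ite (fun t => t ≤ x) (fun t => cumul n t * (f x : ℝ≥0∞))]
        _ = ∑' t : S, ∑' x : S, (if t ≤ x then cumul n t * (f x : ℝ≥0∞) else 0) :=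
            ENNReal.tsum_comm
        _ = ∑' t : S, cumul n t * upf f t := by
            refine tsum_congr fun t => ?_
            rw [← tsum_subtype_eq_tsum_ite (fun x => t ≤ x)
                (fun x => cumul n t * (f x : ℝ≥0∞)), ENNReal.tsum_mul_left]
            rfl
        _ = a⁻¹ * ∑' t : S, cumul n t * (f t : ℝ≥0∞) := by
            rw [← ENNReal.tsum_mul_left]
            exact tsum_congr fun t => by rw [hupf t, mul_left_comm]
        _ = a⁻¹ ^ (n + 1) := by rw [ih, pow_succ, mul_comm]
  refine ⟨key, ?_⟩
  have hcard : ∀ x : S, (Nat.card {t : S // t ≤ x} : ℝ≥0∞) = cumul 1 x := by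
    intro x
    have : Fintype {t : S // t ≤ x} := (hfin x).fintype
    simp only [cumul]
    rw [tsum_fintype]
    simp [Nat.card_eq_fintype_card, Finset.sum_const]
  calc ∑' x : S, (Nat.card {t : S // t ≤ x} : ℝ≥0∞) * (f x : ℝ≥0∞)
      = ∑' x : S, cumul 1 x * (f x : ℝ≥0∞) := tsum_congr fun x => by rw [hcard x]
    _ = a⁻¹ := by rw [key 1, pow_one]
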